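/- arXiv:1806.08965 — 2 statements merged into one kernel-verified Lean document; each statement's English description precedes it below -/
import Mathlib

section
/- The set {q ∈ {0,1,2,3}^3 : q differs from a fixed point p in at most 2 coordinates} is a geometric hyperplane of S_3(3): every line of S_3(3) either lies fully in this set or meets it in exactly one point. -/
/-- A line of `S_3(3)`: fix two coordinates and vary the third. -/
def CubeIsLine (L : Set (Fin 3 → Fin 4)) : Prop :=
  ∃ (i : Fin 3) (c : Fin 3 → Fin 4), L = {p | ∀ j, j ≠ i → p j = c j}

lemma card_le_two_of_agree {p q : Fin 3 → Fin 4} (j : Fin 3) (h : q j = p j) :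
    (Finset.univ.filter fun k => q k ≠ p k).card ≤ 2 := by
  have hsub : (Finset.univ.filter fun k => q k ≠ p k) ⊆ Finset.univ.erase j := by
    intro k hk
    simp only [Finset.mem_filter, Finset.mem_univ, true_and] at hk
    refine Finset.mem_erase.mpr ⟨?_, Finset.mem_univ k⟩
    rintro rfl; exact hk h
  calc (Finset.univ.filter fun k => q k ≠ p k).card
      ≤ (Finset.univ.erase j).card := Finset.card_le_card hsub
    _ = 2 := by rw [Finset.card_erase_of_mem (Finset.mem_univ j)]; simp

lemma exists_agree {p q : Fin 3 → Fin 4}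
    (h : (Finset.univ.filter fun k => q k ≠ p k).card ≤ 2) : ∃ j, q j = p j := by
  by_contra hc
  push_neg at hc
  have : (Finset.univ.filter fun k => q k ≠ p k) = Finset.univ := by
    ext k; simp [hc k]
  rw [this] at h
  simp at h

/-- The set of points differing from a fixed point `p` in at most 2 coordinates
is a geometric hyperplane of `S_3(3)`: it is proper, and every line either lies
fully in it or meets it in exactly one point. -/
theorem cube_singular_is_hyperplane (p : Fin 3 → Fin 4) :
    ({q : Fin 3 → Fin 4 |
        (Finset.univ.filter fun j => q j ≠ p j).card ≤ 2} ≠ Set.univ) ∧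
    ∀ L : Set (Fin 3 → Fin 4), CubeIsLine L →
      L ⊆ {q | (Finset.univ.filter fun j => q j ≠ p j).card ≤ 2} ∨
      (L ∩ {q | (Finset.univ.filter fun j => q j ≠ p j).card ≤ 2}).ncard = 1 := by
  constructor
  · intro h
    have hmem : (fun j => p j + 1) ∈
        {q : Fin 3 → Fin 4 | (Finset.univ.filter fun j => q j ≠ p j).card ≤ 2} := by
      rw [h]; trivial
    obtain ⟨j, hj⟩ := exists_agree hmem
    have h10 : (1 : Fin 4) = 0 := add_left_cancel (hj.trans (add_zero (p j)).symm)
    exact absurd h10 (by decide)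
  · rintro L ⟨i, c, rfl⟩
    by_cases hc : ∃ j, j ≠ i ∧ c j = p j
    · left
      obtain ⟨j, hji, hcp⟩ := hc
      intro q hq
      exact card_le_two_of_agree j ((hq j hji).trans hcp)
    · right
      push_neg at hc
      have hset : ({q | ∀ j, j ≠ i → q j = c j} ∩
          {q : Fin 3 → Fin 4 | (Finset.univ.filter fun j => q j ≠ p j).card ≤ 2})
          = {Function.update c i (p i)} := by
        ext q
        constructor
        · rintro ⟨hL, hH⟩
          obtain ⟨j, hj⟩ := exists_agree hH
          have hji : j = i := by
            by_contra hji
            exact hc j hji ((hL j hji) ▸ hj)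
          subst hji
          funext k
          by_cases hk : k = j
          · subst hk; rw [hj, Function.update_self]
          · rw [Function.update_of_ne hk, hL k hk]
        · rintro rfl
          refine ⟨fun j hj => Function.update_of_ne hj _ _, ?_⟩
          exact card_le_two_of_agree i (Function.update_self i (p i) c)
      rw [hset, Set.ncard_singleton]
end

section
/- If H' and H'' are geometric hyperplanes of a partial linear space C in which every line has exactly 3 points, then H' ⊕ H'' := (H' ∩ H'') ∪ (C \ (H' ∪ H'')) is again a geometric hyperplane of C (or equals all of C), i.e. every line of C either lies in H' ⊕ H'' or meets it in exactly one point. -/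
/-- If `H'` and `H''` are geometric hyperplanes of a partial linear space with
3 points per line, then `(H' ∩ H'') ∪ (P \ (H' ∪ H''))` again satisfies the
hyperplane line condition: every line lies in it or meets it in exactly one
point. -/
theorem veldkamp_sum_is_hyperplane {P : Type*} (Lines : Set (Set P))
    (h3 : ∀ L ∈ Lines, L.ncard = 3)
    (hpl : ∀ L ∈ Lines, ∀ L' ∈ Lines, L ≠ L' → (L ∩ L').ncard ≤ 1)
    (H' H'' : Set P)
    (hH'p : H' ≠ Set.univ) (hH''p : H'' ≠ Set.univ)
    (hH' : ∀ L ∈ Lines, L ⊆ H' ∨ (L ∩ H').ncard = 1)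
    (hH'' : ∀ L ∈ Lines, L ⊆ H'' ∨ (L ∩ H'').ncard = 1) :
    ∀ L ∈ Lines, L ⊆ (H' ∩ H'') ∪ (H' ∪ H'')ᶜ ∨
      (L ∩ ((H' ∩ H'') ∪ (H' ∪ H'')ᶜ)).ncard = 1 := by
  intro L hL
  have hLfin : L.Finite := by
    apply Set.finite_of_ncard_ne_zero
    rw [h3 L hL]; norm_num
  rcases hH' L hL with h1 | h1 <;> rcases hH'' L hL with h2 | h2
  · left
    intro x hx
    exact Or.inl ⟨h1 hx, h2 hx⟩
  · right
    have : L ∩ ((H' ∩ H'') ∪ (H' ∪ H'')ᶜ) = L ∩ H'' := by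
      ext x
      simp only [Set.mem_inter_iff, Set.mem_union, Set.mem_compl_iff]
      constructor
      · rintro ⟨hx, ⟨_, h⟩ | h⟩
        · exact ⟨hx, h⟩
        · exact absurd (Or.inl (h1 hx)) h
      · rintro ⟨hx, h⟩
        exact ⟨hx, Or.inl ⟨h1 hx, h⟩⟩
    rw [this]; exact h2
  · right
    have : L ∩ ((H' ∩ H'') ∪ (H' ∪ H'')ᶜ) = L ∩ H' := by
      ext x
      simp only [Set.mem_inter_iff, Set.mem_union, Set.mem_compl_iff]
      constructor
      · rintro ⟨hx, ⟨h, _⟩ | h⟩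
        · exact ⟨hx, h⟩
        · exact absurd (Or.inr (h2 hx)) h
      · rintro ⟨hx, h⟩
        exact ⟨hx, Or.inl ⟨h, h2 hx⟩⟩
    rw [this]; exact h1
  · obtain ⟨p, hp⟩ := Set.ncard_eq_one.mp h1
    obtain ⟨q, hq⟩ := Set.ncard_eq_one.mp h2
    have hpH' : p ∈ L ∩ H' := hp ▸ rfl
    have hqH'' : q ∈ L ∩ H'' := hq ▸ rfl
    have memH' : ∀ x ∈ L, (x ∈ H' ↔ x = p) := by
      intro x hx
      constructor
      · intro h; have : x ∈ L ∩ H' := ⟨hx, h⟩; rwa [hp] at this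
      · rintro rfl; exact hpH'.2
    have memH'' : ∀ x ∈ L, (x ∈ H'' ↔ x = q) := by
      intro x hx
      constructor
      · intro h; have : x ∈ L ∩ H'' := ⟨hx, h⟩; rwa [hq] at this
      · rintro rfl; exact hqH''.2
    by_cases hpq : p = q
    · left
      intro x hx
      simp only [Set.mem_union, Set.mem_inter_iff, Set.mem_compl_iff]
      by_cases hxp : x = p
      · exact Or.inl ⟨(memH' x hx).mpr hxp, (memH'' x hx).mpr (hxp.trans hpq)⟩
      · refine Or.inr ?_
        rintro (h | h)
        · exact hxp ((memH' x hx).mp h)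
        · exact hxp (((memH'' x hx).mp h).trans hpq.symm)
    · right
      have key : L ∩ ((H' ∩ H'') ∪ (H' ∪ H'')ᶜ) = L \ {p, q} := by
        ext x
        simp only [Set.mem_inter_iff, Set.mem_union, Set.mem_compl_iff,
          Set.mem_diff, Set.mem_insert_iff, Set.mem_singleton_iff]
        constructor
        · rintro ⟨hx, ⟨hA, hB⟩ | h⟩
          · exact absurd (((memH' x hx).mp hA).symm.trans ((memH'' x hx).mp hB)) hpq
          · push_neg at h
            exact ⟨hx, by
              rintro (rfl | rfl)
              · exact h.1 hpH'.2
              · exact h.2 hqH''.2⟩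
        · rintro ⟨hx, h⟩
          push_neg at h
          refine ⟨hx, Or.inr ?_⟩
          rintro (hA | hB)
          · exact h.1 ((memH' x hx).mp hA)
          · exact h.2 ((memH'' x hx).mp hB)
      have hsub : ({p, q} : Set P) ⊆ L := by
        intro x hx
        simp only [Set.mem_insert_iff, Set.mem_singleton_iff] at hx
        rcases hx with rfl | rfl
        · exact hpH'.1
        · exact hqH''.1
      rw [key, Set.ncard_diff hsub, h3 L hL, Set.ncard_pair hpq]
end
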